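/- Under the same hypotheses as the previous statement (Lemma 4.1 of the paper), the imaginary part satisfies $y_z=-\frac{h^2 u_0\sum_j\frac{y_2 w_j\lambda_j v_0}{(\lambda_j+u_0)^2+v_0^2}+h^2 v_0\big(1-y_2+\sum_j\frac{y_2 w_j\lambda_j(\lambda_j+u_0)}{(\lambda_j+u_0)^2+v_0^2}\big)}{y_2 D}+\frac{y_1 v_0}{y_2}$, where $D$ is the denominator defined there. -/
import Mathlib


open Finset

/-- Lemma 4.1, imaginary-part formula (4.3). -/
theorem stmt15 (p : ℕ) (lam w : Fin p → ℝ)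
    (hlam : ∀ j, 0 < lam j) (hw : ∀ j, 0 ≤ w j) (hwsum : ∑ j, w j = 1)
    (xz yz u0 v0 y1 y2 h2 : ℝ) (hy1 : 0 < y1) (hy2 : 0 < y2)
    (hh2 : h2 = y1 + y2 - y1 * y2)
    (hpos : ∀ j, 0 < (lam j + u0) ^ 2 + v0 ^ 2)
    (hD : ((1 - y2 + ∑ j, y2 * w j * lam j * (lam j + u0) / ((lam j + u0) ^ 2 + v0 ^ 2)) ^ 2
          + (∑ j, y2 * w j * lam j * v0 / ((lam j + u0) ^ 2 + v0 ^ 2)) ^ 2) ≠ 0)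
    (heq : (⟨xz, yz⟩ : ℂ)
      = -((h2 : ℂ) * (⟨u0, v0⟩ : ℂ))
          / ((y2 : ℂ) * (1 - (y2 : ℂ)
              + (y2 : ℂ) * ∑ j, (w j : ℂ) * (lam j : ℂ) / ((lam j : ℂ) + (⟨u0, v0⟩ : ℂ))))
        + (y1 : ℂ) * (⟨u0, v0⟩ : ℂ) / (y2 : ℂ)) :
    yz = -(h2 * u0 * ∑ j, y2 * w j * lam j * v0 / ((lam j + u0) ^ 2 + v0 ^ 2)
            + h2 * v0 * (1 - y2 + ∑ j, y2 * w j * lam j * (lam j + u0) / ((lam j + u0) ^ 2 + v0 ^ 2)))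
          / (y2 * ((1 - y2 + ∑ j, y2 * w j * lam j * (lam j + u0) / ((lam j + u0) ^ 2 + v0 ^ 2)) ^ 2
              + (∑ j, y2 * w j * lam j * v0 / ((lam j + u0) ^ 2 + v0 ^ 2)) ^ 2))
        + y1 * v0 / y2 := by
  set a := ∑ j, w j * lam j * (lam j + u0) / ((lam j + u0) ^ 2 + v0 ^ 2) with ha
  set b := ∑ j, w j * lam j * v0 / ((lam j + u0) ^ 2 + v0 ^ 2) with hb
  have hda : (∑ j, y2 * w j * lam j * (lam j + u0) / ((lam j + u0) ^ 2 + v0 ^ 2)) = y2 * a := by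
    rw [ha, Finset.mul_sum]; exact Finset.sum_congr rfl fun j _ => by ring
  have hdb : (∑ j, y2 * w j * lam j * v0 / ((lam j + u0) ^ 2 + v0 ^ 2)) = y2 * b := by
    rw [hb, Finset.mul_sum]; exact Finset.sum_congr rfl fun j _ => by ring
  rw [hda, hdb] at hD ⊢
  have hd : ∀ j, ((lam j : ℂ) + ⟨u0, v0⟩) ≠ 0 := by
    intro j h
    have h1 : lam j + u0 = 0 := by
      have := congrArg Complex.re h; simpa using this
    have h2 : v0 = 0 := by
      have := congrArg Complex.im h; simpa using this
    have := hpos j; rw [h1, h2] at this; simp at this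
  have hC : (∑ j, (w j : ℂ) * (lam j : ℂ) / ((lam j : ℂ) + ⟨u0, v0⟩)) = ⟨a, -b⟩ := by
    have hterm : ∀ j, (w j : ℂ) * (lam j : ℂ) / ((lam j : ℂ) + ⟨u0, v0⟩)
        = ⟨w j * lam j * (lam j + u0) / ((lam j + u0) ^ 2 + v0 ^ 2),
           -(w j * lam j * v0 / ((lam j + u0) ^ 2 + v0 ^ 2))⟩ := by
      intro j
      rw [div_eq_iff (hd j)]
      apply Complex.ext <;>
        simp [Complex.mul_re, Complex.mul_im, Complex.add_re, Complex.add_im] <;>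
        field_simp [(hpos j).ne'] <;> ring
    rw [Finset.sum_congr rfl fun j _ => hterm j]
    apply Complex.ext <;> simp [ha, hb, Complex.re_sum, Complex.im_sum]
  set S1 := 1 - y2 + y2 * a with hS1
  set S2 := y2 * b with hS2
  have hW : ((y2 : ℂ) * (1 - (y2 : ℂ) + (y2 : ℂ) * (⟨a, -b⟩ : ℂ))) = (⟨y2 * S1, -(y2 * S2)⟩ : ℂ) := by
    apply Complex.ext <;> simp [hS1, hS2] <;> ring
  rw [hC, hW] at heq
  have hy2' : (y2 : ℝ) ≠ 0 := ne_of_gt hy2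
  have him := congrArg Complex.im heq
  have hNS : Complex.normSq (⟨y2 * S1, -(y2 * S2)⟩ : ℂ) = y2 ^ 2 * (S1 ^ 2 + S2 ^ 2) := by
    simp [Complex.normSq_apply]; ring
  simp only [Complex.add_im, Complex.div_im, Complex.neg_im, Complex.neg_re,
    Complex.mul_im, Complex.mul_re, Complex.ofReal_re, Complex.ofReal_im,
    Complex.normSq_ofReal, hNS] at him
  rw [him]
  have hne : y2 ^ 2 * (S1 ^ 2 + S2 ^ 2) ≠ 0 := mul_ne_zero (pow_ne_zero 2 hy2') hD
  field_simp
  ring
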